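/- Let R = M_n(F) where F is an algebraically closed field of characteristic p > 0 with p ≠ 2 and p ∤ n, and let G be a finite elementary abelian p-group. Suppose R = ⊕_{g∈G} R_g is a G-grading of the Lie algebra R^(−), i.e. [R_g, R_h] ⊆ R_{gh} for all g,h ∈ G. Then R = ⊕_{g∈G} R_g is a G-grading of the associative algebra R (i.e. R_g R_h ⊆ R_{gh} for all g,h ∈ G) if and only if the identity matrix 1 lies in the component R_1 of the neutral element of G. -/

import Mathlib

open Matrix

section helpers
variable {F : Type*} [Field F] {n : ℕ}

private lemma hm_aux (X : Matrix (Fin n) (Fin n) F) (k l s t : Fin n) :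
    (X * single k l (1:F)) s t = if t = l then X s k else 0 := by
  simp [Matrix.mul_apply, Matrix.single, ite_and, Finset.sum_ite_eq, eq_comm]

private lemma hm'_aux (X : Matrix (Fin n) (Fin n) F) (k l s t : Fin n) :
    (single k l (1:F) * X) s t = if s = k then X l t else 0 := by
  simp [Matrix.mul_apply, Matrix.single, ite_and, Finset.sum_ite_eq, eq_comm]

private lemma one_eq_sum_e : (1 : Matrix (Fin n) (Fin n) F) = ∑ j, single j j (1:F) := by
  ext s t
  simp [Matrix.sum_apply, Matrix.single, Matrix.one_apply, ite_and, Finset.sum_ite_eq, eq_comm]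

end helpers

lemma lie_der_inner {F : Type*} [Field F] {n : ℕ}
    (h2 : (2:F) ≠ 0) (hn : (n:F) ≠ 0)
    (D : Matrix (Fin n) (Fin n) F →ₗ[F] Matrix (Fin n) (Fin n) F)
    (hD : ∀ x y, D (x*y - y*x) = D x * y - y * D x + (x * D y - D y * x))
    (h1 : D 1 = 0) :
    ∃ a : Matrix (Fin n) (Fin n) F, ∀ x, D x = a * x - x * a := by
  have hn0 : n ≠ 0 := by rintro rfl; simp at hn
  by_cases hone : n = 1
  · subst hone
    refine ⟨0, fun x => ?_⟩
    have hx : x = x 0 0 • (1 : Matrix (Fin 1) (Fin 1) F) := by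
      ext s t; fin_cases s; fin_cases t; simp [Matrix.one_apply]
    rw [hx, LinearMap.map_smul, h1]; simp
  · have hn2 : 2 ≤ n := by omega
    have : NeZero n := ⟨hn0⟩
    set e : Fin n → Fin n → Matrix (Fin n) (Fin n) F := fun i j => single i j (1:F) with he
    set i0 : Fin n := ⟨0, by omega⟩ with hi0
    have hm : ∀ (X : Matrix (Fin n) (Fin n) F) (k l s t : Fin n),
        (X * e k l) s t = if t = l then X s k else 0 := fun X k l s t => hm_aux X k l s t
    have hm' : ∀ (X : Matrix (Fin n) (Fin n) F) (k l s t : Fin n),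
        (e k l * X) s t = if s = k then X l t else 0 := fun X k l s t => hm'_aux X k l s t
    have hee : ∀ i j l : Fin n, e i j * e j l = e i l := by
      intro i j l; rw [he]; simp only []
      rw [Matrix.single_mul_single_same, one_mul]
    have hee' : ∀ i j k l : Fin n, j ≠ k → e i j * e k l = 0 := by
      intro i j k l h; rw [he]; simp only []
      rw [Matrix.single_mul_single_of_ne (h := h)]
    -- Structural facts about D
    have stepA : ∀ j k : Fin n, j ≠ k → ∀ s t : Fin n,
        (0:F) = (if t = k then (D (e j j)) s k else 0) - (if s = k then (D (e j j)) k t else 0)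
          + ((if s = j then (D (e k k)) j t else 0) - (if t = j then (D (e k k)) s j else 0)) := by
      intro j k hjk s t
      have h0 : e j j * e k k - e k k * e j j = 0 := by
        rw [hee' j j k k hjk, hee' k k j j hjk.symm, sub_zero]
      have h := hD (e j j) (e k k)
      rw [h0, map_zero] at h
      have h3 := congrFun (congrFun h s) t
      simpa [Matrix.add_apply, Matrix.sub_apply, hm, hm'] using h3
    have A1 : ∀ j s t : Fin n, s ≠ j → t ≠ j → s ≠ t → (D (e j j)) s t = 0 := by
      intro j s t hsj htj hst
      have h := (stepA j t (Ne.symm htj) s t).symm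
      simpa [hst, htj, hsj] using h
    have A2 : ∀ j t : Fin n, j ≠ t → (D (e j j)) j t = - (D (e t t)) j t := by
      intro j t hjt
      have h := stepA j t hjt j t
      simp [hjt, Ne.symm hjt] at h
      linear_combination -h
    -- the inner part
    set a : Matrix (Fin n) (Fin n) F := Matrix.of (fun i j =>
      if i = j then (if i = i0 then 0 else -(D (e i0 i)) i0 i) else (D (e j j)) i j) with ha
    have ha_off : ∀ i j : Fin n, i ≠ j → a i j = (D (e j j)) i j := by
      intro i j hij; rw [ha]; simp [hij]
    have ha_d0 : a i0 i0 = 0 := by rw [ha]; simp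
    have ha_d : ∀ i : Fin n, i ≠ i0 → a i i = -(D (e i0 i)) i0 i := by
      intro i hii0; rw [ha]; simp [hii0]
    set E : Matrix (Fin n) (Fin n) F →ₗ[F] Matrix (Fin n) (Fin n) F :=
      D - (LinearMap.mulLeft F a - LinearMap.mulRight F a) with hEdef
    have hEapp : ∀ x, E x = D x - (a * x - x * a) := by
      intro x; rw [hEdef]
      simp [LinearMap.sub_apply, LinearMap.mulLeft_apply, LinearMap.mulRight_apply]
    have hE : ∀ x y, E (x*y - y*x) = E x * y - y * E x + (x * E y - E y * x) := by
      intro x y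
      rw [hEapp, hEapp, hEapp, hD]
      noncomm_ring
    have hE1 : E 1 = 0 := by rw [hEapp, h1]; noncomm_ring
    -- normalization
    have norm1 : ∀ j s t : Fin n, s ≠ t → (E (e j j)) s t = 0 := by
      intro j s t hst
      rw [hEapp]
      rw [Matrix.sub_apply, Matrix.sub_apply, hm, hm']
      by_cases htj : t = j
      · have hsj : s ≠ j := fun h => hst (h.trans htj.symm)
        rw [if_pos htj, if_neg hsj, ha_off s j hsj, htj]
        ring
      · by_cases hsj : s = j
        · have hjt : j ≠ t := fun h => htj h.symm
          rw [if_neg htj, if_pos hsj, hsj, ha_off j t hjt, A2 j t hjt]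
          ring
        · rw [if_neg htj, if_neg hsj, A1 j s t hsj htj hst]
          ring
    have norm2 : ∀ i : Fin n, i ≠ i0 → (E (e i0 i)) i0 i = 0 := by
      intro i hii0
      rw [hEapp, Matrix.sub_apply, Matrix.sub_apply, hm, hm']
      rw [if_pos rfl, if_pos rfl, ha_d0, ha_d i hii0]
      ring
    -- relation 2 entries
    have EQ2 : ∀ j k : Fin n, j ≠ k → E (e j k)
        = E (e j j) * e j k - e j k * E (e j j) + (e j j * E (e j k) - E (e j k) * e j j) := by
      intro j k hjk
      have h0 : e j j * e j k - e j k * e j j = e j k := by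
        rw [hee j j k, hee' j k j j (Ne.symm hjk), sub_zero]
      have h := hE (e j j) (e j k); rw [h0] at h; exact h
    have entry2 : ∀ j k : Fin n, j ≠ k → ∀ s t : Fin n, (E (e j k)) s t
        = (if t = k then (E (e j j)) s j else 0) - (if s = j then (E (e j j)) k t else 0)
          + ((if s = j then (E (e j k)) j t else 0) - (if t = j then (E (e j k)) s j else 0)) := by
      intro j k hjk s t
      have h3 := congrFun (congrFun (EQ2 j k hjk) s) t
      simpa [Matrix.add_apply, Matrix.sub_apply, hm, hm'] using h3
    have EQ3 : ∀ j k : Fin n, j ≠ k → E (e j k)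
        = E (e j k) * e k k - e k k * E (e j k) + (e j k * E (e k k) - E (e k k) * e j k) := by
      intro j k hjk
      have h0 : e j k * e k k - e k k * e j k = e j k := by
        rw [hee j k k, hee' k k j k (Ne.symm hjk), sub_zero]
      have h := hE (e j k) (e k k); rw [h0] at h; exact h
    have entry3 : ∀ j k : Fin n, j ≠ k → ∀ s t : Fin n, (E (e j k)) s t
        = (if t = k then (E (e j k)) s k else 0) - (if s = k then (E (e j k)) k t else 0)
          + ((if s = j then (E (e k k)) k t else 0) - (if t = k then (E (e k k)) s j else 0)) := by
      intro j k hjk s t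
      have h3 := congrFun (congrFun (EQ3 j k hjk) s) t
      simpa [Matrix.add_apply, Matrix.sub_apply, hm, hm'] using h3
    set w : Fin n → F := fun j => (E (e j j)) j j with hw
    have stepB : ∀ j k : Fin n, j ≠ k → (E (e j j)) k k = w j := by
      intro j k hjk
      have h := entry2 j k hjk j k
      rw [if_pos rfl, if_pos rfl, if_pos rfl, if_neg (Ne.symm hjk)] at h
      rw [hw]; simp only []
      linear_combination h
    have diagY : ∀ (j s t : Fin n), (E (e j j)) s t = if s = t then w j else 0 := by
      intro j s t
      by_cases hst : s = t
      · rw [if_pos hst, hst]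
        by_cases htj : t = j
        · rw [htj, hw]
        · exact stepB j t (fun h => htj h.symm)
      · rw [if_neg hst]; exact norm1 j s t hst
    set c : Fin n → Fin n → F := fun j k => (E (e j k)) j k with hc
    have hZ : ∀ j k : Fin n, j ≠ k → ∀ s t : Fin n,
        (E (e j k)) s t = if s = j ∧ t = k then c j k else 0 := by
      intro j k hjk s t
      by_cases hsj : s = j
      · by_cases htk : t = k
        · rw [if_pos ⟨hsj, htk⟩, hc, hsj, htk]
        · rw [if_neg (fun hh => htk hh.2), hsj]
          by_cases htj : t = j
          · rw [htj]
            have h := entry2 j k hjk j j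
            simp [hjk, Ne.symm hjk, diagY] at h
            exact h
          · have h := entry3 j k hjk j t
            simp [hjk, Ne.symm hjk, htk, Ne.symm htk, diagY] at h
            exact h
      · rw [if_neg (fun hh => hsj hh.1)]
        have h := entry2 j k hjk s t
        simp [hsj, diagY] at h
        by_cases htj : t = j
        · rw [htj] at h ⊢
          simp at h
          have h2' : (2:F) * (E (e j k)) s j = 0 := by linear_combination h
          exact (mul_eq_zero.mp h2').resolve_left h2
        · simp [htj] at h
          exact h
    have hsum1 : (1 : Matrix (Fin n) (Fin n) F) = ∑ j, e j j := one_eq_sum_e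
    have sumw : ∑ j, w j = 0 := by
      have h := hE1
      rw [hsum1, map_sum] at h
      have h3 := congrFun (congrFun h i0) i0
      simpa [Matrix.sum_apply, diagY] using h3
    -- relation 4
    have entry4 : ∀ j k : Fin n, j ≠ k → ∀ s t : Fin n,
        (E (e j j)) s t - (E (e k k)) s t
        = (if t = j then (E (e j k)) s k else 0) - (if s = k then (E (e j k)) j t else 0)
          + ((if s = j then (E (e k j)) k t else 0) - (if t = k then (E (e k j)) s j else 0)) := by
      intro j k hjk s t
      have h0 : e j k * e k j - e k j * e j k = e j j - e k k := by
        rw [hee j k j, hee k j k]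
      have h := hE (e j k) (e k j)
      rw [h0, map_sub] at h
      have h3 := congrFun (congrFun h s) t
      simpa [Matrix.add_apply, Matrix.sub_apply, hm, hm'] using h3
    have hwconst : ∀ j k : Fin n, w j = w k := by
      intro j k
      by_cases hjk : j = k
      · rw [hjk]
      · have hi := entry4 j k hjk j j
        have hii := entry4 j k hjk k k
        simp [hjk, Ne.symm hjk, diagY, hc] at hi hii
        have h2' : (2:F) * (w j - w k) = 0 := by linear_combination hi + hii
        have := (mul_eq_zero.mp h2').resolve_left h2
        linear_combination this
    have hcskew : ∀ j k : Fin n, j ≠ k → c j k + c k j = 0 := by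
      intro j k hjk
      have hi := entry4 j k hjk j j
      simp [hjk, Ne.symm hjk, diagY, hc] at hi
      rw [hc]; simp only []
      linear_combination (hwconst j k) - hi
    have wzero : ∀ j, w j = 0 := by
      intro j
      have h : ∑ k, w k = (n : F) * w j := by
        rw [Finset.sum_congr rfl (fun k _ => hwconst k j), Finset.sum_const,
          Finset.card_univ, Fintype.card_fin, nsmul_eq_mul]
      rw [sumw] at h
      exact ((mul_eq_zero.mp h.symm).resolve_left hn)
    have czero_i0 : ∀ k : Fin n, k ≠ i0 → c i0 k = 0 := by
      intro k hk
      rw [hc]; simp only []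
      exact norm2 k hk
    have czero_i0' : ∀ k : Fin n, k ≠ i0 → c k i0 = 0 := by
      intro k hk
      have := hcskew i0 k (Ne.symm hk)
      rw [czero_i0 k hk] at this
      linear_combination this
    have czero : ∀ j k : Fin n, j ≠ k → c j k = 0 := by
      intro j k hjk
      by_cases hj : j = i0
      · rw [hj]; exact czero_i0 k (fun hh => hjk (hj.trans hh.symm))
      · by_cases hk : k = i0
        · rw [hk]; exact czero_i0' j (fun hh => hjk (hh.trans hk.symm))
        · have hz1 : E (e j i0) = 0 := by
            ext s t
            rw [hZ j i0 hj s t, czero_i0' j hj]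
            simp
          have hz2 : E (e i0 k) = 0 := by
            ext s t
            rw [hZ i0 k (fun hh => hk hh.symm) s t, czero_i0 k hk]
            simp
          have h0 : e j i0 * e i0 k - e i0 k * e j i0 = e j k := by
            rw [hee j i0 k, hee' i0 k j i0 (Ne.symm hjk), sub_zero]
          have h := hE (e j i0) (e i0 k)
          rw [h0, hz1, hz2] at h
          simp at h
          rw [hc]; simp only []
          rw [h]
          simp
    have Ezero : ∀ i j : Fin n, E (e i j) = 0 := by
      intro i j
      by_cases hij : i = j
      · rw [hij]; ext s t
        rw [diagY j s t, wzero j]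
        simp
      · ext s t
        rw [hZ i j hij s t, czero i j hij]
        simp
    refine ⟨a, fun x => ?_⟩
    have hx0 : E x = 0 := by
      have hsmul : ∀ (i j : Fin n), single i j (x i j) = x i j • e i j := by
        intro i j; rw [he]; simp only []
        rw [Matrix.smul_single, smul_eq_mul, mul_one]
      conv_lhs => rw [matrix_eq_sum_single x]
      rw [map_sum]
      refine Finset.sum_eq_zero fun i _ => ?_
      rw [map_sum]
      refine Finset.sum_eq_zero fun j _ => ?_
      rw [hsmul i j, LinearMap.map_smul, Ezero i j, smul_zero]
    have h := hEapp x
    rw [hx0] at h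
    exact (sub_eq_zero.mp h.symm)

/-- Corollary 3.1: For `R = Mₙ(F)`, `F` algebraically closed of characteristic `p > 0`,
`p ≠ 2`, `p ∤ n`, and `G` a finite elementary abelian `p`-group, a `G`-grading of the
Lie algebra `R⁽⁻⁾` is a `G`-grading of the associative algebra `R` iff `1 ∈ R₁`. -/
theorem stmt_0 {F : Type*} [Field F] [IsAlgClosed F] {p : ℕ} (hp : 0 < p)
    [CharP F p] (hp2 : p ≠ 2) {n : ℕ} (hn : ¬ p ∣ n)
    {G : Type*} [CommGroup G] [Fintype G]
    (hG : ∀ g : G, g ≠ 1 → orderOf g = p)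
    (Rg : G → Submodule F (Matrix (Fin n) (Fin n) F))
    (hindep : iSupIndep Rg) (hsup : ⨆ g, Rg g = ⊤)
    (hLie : ∀ g h : G, ∀ x ∈ Rg g, ∀ y ∈ Rg h, x * y - y * x ∈ Rg (g * h)) :
    (∀ g h : G, ∀ x ∈ Rg g, ∀ y ∈ Rg h, x * y ∈ Rg (g * h)) ↔
      (1 : Matrix (Fin n) (Fin n) F) ∈ Rg 1 := by
  classical
  have hprime : p.Prime := (CharP.char_is_prime_or_zero F p).resolve_right (by omega)
  haveI : Fact p.Prime := ⟨hprime⟩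
  have h2F : (2:F) ≠ 0 := by
    intro hzero
    have hdvd : p ∣ 2 := (CharP.cast_eq_zero_iff F p 2).mp (by exact_mod_cast hzero)
    exact hp2 ((Nat.prime_dvd_prime_iff_eq hprime Nat.prime_two).mp hdvd)
  have hnF : ((n:ℕ) : F) ≠ 0 := fun hzero => hn ((CharP.cast_eq_zero_iff F p n).mp hzero)
  haveI : DirectSum.Decomposition Rg :=
    ((DirectSum.isInternal_submodule_iff_iSupIndep_and_iSup_eq_top Rg).mpr
      ⟨hindep, hsup⟩).chooseDecomposition
  set Pg : G → (Matrix (Fin n) (Fin n) F →ₗ[F] Matrix (Fin n) (Fin n) F) := fun g =>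
    (Rg g).subtype ∘ₗ (DirectSum.component F G (fun g => ↥(Rg g)) g) ∘ₗ
      (DirectSum.decomposeLinearEquiv Rg).toLinearMap with hPgdef
  have hPg : ∀ (g : G) x, Pg g x = ↑((DirectSum.decompose Rg) x g) := fun g x => rfl
  have hPmem : ∀ (g : G) x, Pg g x ∈ Rg g := fun g x => by
    rw [hPg]; exact ((DirectSum.decompose Rg) x g).2
  have hP1 : ∀ (g : G) x, x ∈ Rg g → Pg g x = x := fun g x hx => by
    rw [hPg]; exact DirectSum.decompose_of_mem_same Rg hx
  have hP2 : ∀ (g k : G) x, x ∈ Rg g → g ≠ k → Pg k x = 0 := fun g k x hx hgk => by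
    rw [hPg]; exact DirectSum.decompose_of_mem_ne Rg hx hgk
  have hPsum : ∀ x, ∑ g : G, Pg g x = x := by
    intro x
    simp only [hPg]
    refine (Finset.sum_subset (Finset.subset_univ _) ?_).symm.trans
      (DirectSum.sum_support_decompose Rg x)
    intro g _ hg
    rw [DFinsupp.notMem_support_iff.mp hg]
    rfl
  haveI : Module (ZMod p) (Additive G) := AddCommGroup.zmodModule (by
    intro x
    have h1x : Additive.toMul x ^ p = 1 := by
      by_cases hx1 : Additive.toMul x = 1
      · rw [hx1]; exact one_pow p
      · rw [← hG _ hx1]; exact pow_orderOf_eq_one _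
    have hh := ofMul_pow p (Additive.toMul x)
    rw [h1x] at hh
    simpa using hh.symm)
  constructor
  · -- associative grading implies 1 ∈ Rg 1
    intro Hassoc
    have base : ∀ (h : G) z, z ∈ Rg h → Pg 1 (1 : Matrix (Fin n) (Fin n) F) * z = z := by
      intro h z hz
      have hexp : z = ∑ g : G, (Pg g 1) * z := by
        conv_lhs => rw [← one_mul z, ← hPsum (1 : Matrix (Fin n) (Fin n) F)]
        rw [Finset.sum_mul]
      have happ := congrArg (Pg h) hexp
      rw [map_sum] at happ
      have hterm : ∀ g ∈ Finset.univ, g ≠ (1:G) → Pg h ((Pg g 1) * z) = 0 := by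
        intro g _ hg1
        refine hP2 (g*h) h _ (Hassoc g h _ (hPmem g 1) z hz) ?_
        simpa [mul_eq_right] using hg1
      rw [Finset.sum_eq_single 1 hterm (by simp)] at happ
      have hm1 : Pg 1 (1:Matrix (Fin n) (Fin n) F) * z ∈ Rg h := by
        have := Hassoc 1 h _ (hPmem 1 1) z hz
        rwa [one_mul] at this
      rw [hP1 h z hz, hP1 h _ hm1] at happ
      exact happ.symm
    have hall : ∀ z, Pg 1 (1 : Matrix (Fin n) (Fin n) F) * z = z := by
      intro z
      have hzt : z ∈ ⨆ g, Rg g := by rw [hsup]; trivial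
      refine Submodule.iSup_induction Rg
        (motive := fun w => Pg 1 (1 : Matrix (Fin n) (Fin n) F) * w = w)
        hzt (fun h x hx => base h x hx) (by simp) ?_
      intro u v hu hv
      rw [mul_add, hu, hv]
    have hone := hall 1
    rw [mul_one] at hone
    rw [← hone]
    exact hPmem 1 1
  · -- 1 ∈ Rg 1 implies associative grading
    intro h1R g h x hx y hy
    have KEY : ∀ (φ : Additive G →ₗ[ZMod p] ZMod p) (k : G),
        (ZMod.castHom dvd_rfl F) (φ (Additive.ofMul k)) • Pg k (x*y)
        = (ZMod.castHom dvd_rfl F) (φ (Additive.ofMul (g*h))) • Pg k (x*y) := by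
      intro φ k
      set c : G → F := fun g' => (ZMod.castHom dvd_rfl F) (φ (Additive.ofMul g')) with hcdef
      have hcadd : ∀ g1 g2 : G, c (g1*g2) = c g1 + c g2 := by
        intro g1 g2
        rw [hcdef]
        simp only []
        rw [ofMul_mul, map_add, map_add]
      have hc1 : c 1 = 0 := by
        rw [hcdef]; simp only []
        simp
      set Dφ : Matrix (Fin n) (Fin n) F →ₗ[F] Matrix (Fin n) (Fin n) F :=
        ∑ g' : G, c g' • Pg g' with hDdef
      have hDapp : ∀ z, Dφ z = ∑ g' : G, c g' • Pg g' z := by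
        intro z
        rw [hDdef]
        simp [LinearMap.sum_apply, LinearMap.smul_apply]
      have hD1 : ∀ (g' : G) z, z ∈ Rg g' → Dφ z = c g' • z := by
        intro g' z hz
        rw [hDapp, Finset.sum_eq_single g'
          (fun b _ hb => by rw [hP2 g' b z hz (fun hh => hb hh.symm), smul_zero]) (by simp),
          hP1 g' z hz]
      have hDproj : ∀ (k' : G) z, Pg k' (Dφ z) = c k' • Pg k' z := by
        intro k' z
        rw [hDapp, map_sum, Finset.sum_eq_single k' ?_ (by simp)]
        · rw [LinearMap.map_smul, hP1 k' _ (hPmem k' z)]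
        · intro b _ hb
          rw [LinearMap.map_smul, hP2 b k' _ (hPmem b z) hb, smul_zero]
      have hDlie : ∀ u v, Dφ (u*v - v*u) = Dφ u * v - v * Dφ u + (u * Dφ v - Dφ v * u) := by
        have hbase : ∀ (g1 : G), ∀ u ∈ Rg g1, ∀ (g2 : G), ∀ v ∈ Rg g2,
            Dφ (u*v - v*u) = Dφ u * v - v * Dφ u + (u * Dφ v - Dφ v * u) := by
          intro g1 u hu g2 v hv
          rw [hD1 g1 u hu, hD1 g2 v hv, hD1 (g1*g2) _ (hLie g1 g2 u hu v hv), hcadd]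
          simp only [smul_mul_assoc, mul_smul_comm]
          module
        intro u v
        have hut : u ∈ ⨆ g', Rg g' := by rw [hsup]; trivial
        refine Submodule.iSup_induction Rg
          (motive := fun u => ∀ v', Dφ (u*v' - v'*u) = Dφ u * v' - v' * Dφ u + (u * Dφ v' - Dφ v' * u))
          hut ?_ ?_ ?_ v
        · intro g1 u1 hu1 v'
          have hvt : v' ∈ ⨆ g', Rg g' := by rw [hsup]; trivial
          refine Submodule.iSup_induction Rg
            (motive := fun v' => Dφ (u1*v' - v'*u1) = Dφ u1 * v' - v' * Dφ u1 + (u1 * Dφ v' - Dφ v' * u1))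
            hvt ?_ ?_ ?_
          · intro g2 v2 hv2; exact hbase g1 u1 hu1 g2 v2 hv2
          · simp
          · intro z1 z2 hz1 hz2
            have hsplit : u1*(z1+z2) - (z1+z2)*u1 = (u1*z1 - z1*u1) + (u1*z2 - z2*u1) := by
              noncomm_ring
            rw [hsplit, map_add, hz1, hz2, map_add]
            noncomm_ring
        · intro v'; simp
        · intro u1 u2 hu1 hu2 v'
          have hsplit : (u1+u2)*v' - v'*(u1+u2) = (u1*v' - v'*u1) + (u2*v' - v'*u2) := by
            noncomm_ring
          rw [hsplit, map_add, hu1 v', hu2 v', map_add]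
          noncomm_ring
      have hD1z : Dφ 1 = 0 := by rw [hD1 1 1 h1R, hc1, zero_smul]
      obtain ⟨a, hInner⟩ := lie_der_inner h2F hnF Dφ hDlie hD1z
      have hDmul : Dφ (x*y) = Dφ x * y + x * Dφ y := by
        rw [hInner, hInner, hInner]; noncomm_ring
      have hw1 : Pg k (Dφ (x*y)) = c k • Pg k (x*y) := hDproj k _
      have hw2 : Dφ (x*y) = c (g*h) • (x*y) := by
        rw [hDmul, hD1 g x hx, hD1 h y hy, hcadd, smul_mul_assoc, mul_smul_comm, add_smul]
      rw [hw2, LinearMap.map_smul] at hw1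
      exact hw1.symm
    have hvanish : ∀ k : G, k ≠ g*h → Pg k (x*y) = 0 := by
      intro k hk
      by_contra hne
      have hsep : ∀ (φ : Additive G →ₗ[ZMod p] ZMod p),
          φ (Additive.ofMul k - Additive.ofMul (g*h)) = 0 := by
        intro φ
        have hk' := KEY φ k
        have hcc : (ZMod.castHom dvd_rfl F) (φ (Additive.ofMul k))
            = (ZMod.castHom dvd_rfl F) (φ (Additive.ofMul (g*h))) := by
          by_contra hfc
          have h0 : ((ZMod.castHom dvd_rfl F) (φ (Additive.ofMul k))
              - (ZMod.castHom dvd_rfl F) (φ (Additive.ofMul (g*h)))) • Pg k (x*y) = 0 := by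
            rw [sub_smul, hk', sub_self]
          rcases smul_eq_zero.mp h0 with h0 | h0
          · exact hfc (sub_eq_zero.mp h0)
          · exact hne h0
        have hinj := ZMod.castHom_injective F hcc
        rw [map_sub, hinj, sub_self]
      have h0 : Additive.ofMul k - Additive.ofMul (g*h) = 0 :=
        (Module.forall_dual_apply_eq_zero_iff (ZMod p) _).mp hsep
      exact hk (Additive.ofMul.injective (sub_eq_zero.mp h0))
    have hfinal : x*y = Pg (g*h) (x*y) := by
      conv_lhs => rw [← hPsum (x*y)]
      rw [Finset.sum_eq_single (g*h) (fun b _ hb => hvanish b hb) (by simp)]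
    rw [hfinal]
    exact hPmem _ _
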